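/- Let R be a ring, C a class of left R-modules all of whose members are pure injective, and D a class of right R-modules with C^+ ⊆ D and D^+ ⊆ C. Then a homomorphism f : A → C of left R-modules with C ∈ C is a C-preenvelope of A if and only if f^+ : C^+ → A^+ is a D-precover of A^+. -/

import Mathlib

universe u

/-! Common definitions: character modules, purity, pure injectivity. -/

open MulOpposite


/-- The character group `M⁺ = Hom_ℤ(M, ℚ/ℤ)`. -/
def CharMod (M : Type u) [AddCommGroup M] : Type u := M →+ AddCircle (1 : ℚ)

instance (M : Type u) [AddCommGroup M] : AddCommGroup (CharMod M) :=
  inferInstanceAs (AddCommGroup (M →+ AddCircle (1 : ℚ)))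

instance (M : Type u) [AddCommGroup M] : FunLike (CharMod M) M (AddCircle (1 : ℚ)) :=
  inferInstanceAs (FunLike (M →+ AddCircle (1 : ℚ)) M (AddCircle (1 : ℚ)))

instance (M : Type u) [AddCommGroup M] :
    AddMonoidHomClass (CharMod M) M (AddCircle (1 : ℚ)) :=
  inferInstanceAs (AddMonoidHomClass (M →+ AddCircle (1 : ℚ)) M (AddCircle (1 : ℚ)))

/-- If `M` is a left `R`-module, `M⁺` is a right `R`-module via `(c • r) m = c (r • m)`. -/
instance CharMod.moduleOp (R : Type v) [Ring R] (M : Type u) [AddCommGroup M] [Module R M] :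
    Module Rᵐᵒᵖ (CharMod M) where
  smul r c := (c : M →+ AddCircle (1 : ℚ)).comp (DistribMulAction.toAddMonoidHom M r.unop)
  one_smul c := AddMonoidHom.ext fun m => congrArg c (one_smul R m)
  mul_smul r s c := AddMonoidHom.ext fun m => congrArg c (mul_smul s.unop r.unop m)
  smul_zero r := rfl
  smul_add r c d := rfl
  add_smul r s c := AddMonoidHom.ext fun m => by
    show c ((r.unop + s.unop) • m) = c (r.unop • m) + c (s.unop • m)
    rw [add_smul, map_add]
  zero_smul c := AddMonoidHom.ext fun m => by
    show c ((0 : R) • m) = 0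
    rw [zero_smul, map_zero]

@[simp] lemma CharMod.op_smul_apply {R : Type v} [Ring R] {M : Type u} [AddCommGroup M]
    [Module R M] (r : Rᵐᵒᵖ) (c : CharMod M) (m : M) : (r • c) m = c (r.unop • m) := rfl

/-- If `N` is a right `R`-module, `N⁺` is a left `R`-module via `(r • c) n = c (n • r)`. -/
instance CharMod.moduleUnop (R : Type v) [Ring R] (N : Type u) [AddCommGroup N] [Module Rᵐᵒᵖ N] :
    Module R (CharMod N) where
  smul r c := (c : N →+ AddCircle (1 : ℚ)).comp (DistribMulAction.toAddMonoidHom N (op r))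
  one_smul c := AddMonoidHom.ext fun n => congrArg c (one_smul Rᵐᵒᵖ n)
  mul_smul r s c := AddMonoidHom.ext fun n => by
    show c ((op (r * s)) • n) = c (op s • op r • n)
    rw [← mul_smul]; rfl
  smul_zero r := rfl
  smul_add r c d := rfl
  add_smul r s c := AddMonoidHom.ext fun n => by
    show c ((op (r + s)) • n) = c (op r • n) + c (op s • n)
    rw [show op (r + s) = op r + op s from rfl, add_smul, map_add]
  zero_smul c := AddMonoidHom.ext fun n => by
    show c ((op (0 : R)) • n) = 0
    rw [show op (0 : R) = (0 : Rᵐᵒᵖ) from rfl, zero_smul, map_zero]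

@[simp] lemma CharMod.unop_smul_apply {R : Type v} [Ring R] {N : Type u} [AddCommGroup N]
    [Module Rᵐᵒᵖ N] (r : R) (c : CharMod N) (n : N) : (r • c) n = c (op r • n) := rfl

/-- The dual `f⁺ : C⁺ → A⁺` of a map `f : A → C` of left `R`-modules. -/
def charDual {R : Type v} [Ring R] {A C : Type u} [AddCommGroup A] [Module R A]
    [AddCommGroup C] [Module R C] (f : A →ₗ[R] C) : CharMod C →ₗ[Rᵐᵒᵖ] CharMod A where
  toFun c := (c : C →+ AddCircle (1 : ℚ)).comp f.toAddMonoidHom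
  map_add' _ _ := rfl
  map_smul' r c := AddMonoidHom.ext fun a => (congrArg c (f.map_smul r.unop a)).symm

/-- The canonical evaluation map `σ_M : M → M⁺⁺`. -/
def charEval (R : Type v) [Ring R] (M : Type u) [AddCommGroup M] [Module R M] :
    M →ₗ[R] CharMod (CharMod M) where
  toFun m :=
    { toFun := fun c => c m
      map_zero' := rfl
      map_add' := fun _ _ => rfl }
  map_add' m m' := AddMonoidHom.ext fun c => c.map_add m m'
  map_smul' r m := AddMonoidHom.ext fun c => rfl

/-- A linear map `i : M → N` is a pure monomorphism if it is injective and every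
map from a finitely presented module to `N ⧸ im i` lifts to `N`, i.e. the short exact
sequence `0 → M → N → N ⧸ im i → 0` remains exact after applying `Hom(F, -)` for all
finitely presented `F`. -/
def IsPureMono {R : Type v} [Ring R] {M N : Type u} [AddCommGroup M] [Module R M]
    [AddCommGroup N] [Module R N] (i : M →ₗ[R] N) : Prop :=
  Function.Injective i ∧
    ∀ (F : Type u) [AddCommGroup F] [Module R F], Module.FinitePresentation R F →
      ∀ g : F →ₗ[R] (N ⧸ LinearMap.range i),
        ∃ h : F →ₗ[R] N, (LinearMap.range i).mkQ.comp h = g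

/-- A module `E` is pure injective if every map to `E` extends along pure monomorphisms. -/
def IsPureInjective (R : Type v) [Ring R] (E : Type u) [AddCommGroup E] [Module R E] : Prop :=
  ∀ (M N : Type u) [AddCommGroup M] [Module R M] [AddCommGroup N] [Module R N]
    (i : M →ₗ[R] N), IsPureMono i →
      ∀ f : M →ₗ[R] E, ∃ g : N →ₗ[R] E, g.comp i = f

/-! ### Auxiliary lemmas -/

section Aux

variable {R : Type v} [Ring R]

/-- Sum of characters evaluates pointwise. -/
lemma CharMod.sum_apply {M : Type u} [AddCommGroup M] {ι : Type*} (s : Finset ι)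
    (f : ι → CharMod M) (m : M) : (∑ i ∈ s, f i) m = ∑ i ∈ s, f i m := by
  classical
  induction s using Finset.cons_induction with
  | empty => rfl
  | cons a s ha ih =>
    rw [Finset.sum_cons, Finset.sum_cons, ← ih]
    rfl

/-- The dual of a map of right `R`-modules, as a map of left `R`-modules. -/
def charDualOp {Y Z : Type u} [AddCommGroup Y] [Module Rᵐᵒᵖ Y]
    [AddCommGroup Z] [Module Rᵐᵒᵖ Z] (g : Y →ₗ[Rᵐᵒᵖ] Z) : CharMod Z →ₗ[R] CharMod Y where
  toFun c := (c : Z →+ AddCircle (1 : ℚ)).comp g.toAddMonoidHom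
  map_add' _ _ := rfl
  map_smul' r c := AddMonoidHom.ext fun y => (congrArg c (g.map_smul (op r) y)).symm

@[simp] lemma charDualOp_apply {Y Z : Type u} [AddCommGroup Y] [Module Rᵐᵒᵖ Y]
    [AddCommGroup Z] [Module Rᵐᵒᵖ Z] (g : Y →ₗ[Rᵐᵒᵖ] Z) (c : CharMod Z) (y : Y) :
    (charDualOp (R := R) g c) y = c (g y) := rfl

/-- The canonical evaluation map for right `R`-modules. -/
def charEvalOp (R : Type v) [Ring R] (Y : Type u) [AddCommGroup Y] [Module Rᵐᵒᵖ Y] :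
    Y →ₗ[Rᵐᵒᵖ] CharMod (CharMod Y) where
  toFun y :=
    { toFun := fun c => c y
      map_zero' := rfl
      map_add' := fun _ _ => rfl }
  map_add' y y' := AddMonoidHom.ext fun c => c.map_add y y'
  map_smul' r y := AddMonoidHom.ext fun c => rfl

@[simp] lemma charEvalOp_apply {Y : Type u} [AddCommGroup Y] [Module Rᵐᵒᵖ Y]
    (y : Y) (c : CharMod Y) : charEvalOp R Y y c = c y := rfl

@[simp] lemma charEval_apply {M : Type u} [AddCommGroup M] [Module R M]
    (m : M) (c : CharMod M) : charEval R M m c = c m := rfl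

/-- Characters separate points from subgroups. -/
lemma exists_char_vanishing {G : Type u} [AddCommGroup G] (S : AddSubgroup G) (x : G)
    (hx : x ∉ S) : ∃ χ : G →+ AddCircle (1 : ℚ), (∀ s ∈ S, χ s = 0) ∧ χ x ≠ 0 := by
  have hne : (QuotientAddGroup.mk' S x) ≠ 0 := by
    simpa [QuotientAddGroup.eq_zero_iff] using hx
  obtain ⟨c, hc⟩ := CharacterModule.exists_character_apply_ne_zero_of_ne_zero hne
  refine ⟨(c : G ⧸ S →+ AddCircle (1 : ℚ)).comp (QuotientAddGroup.mk' S), fun s hs => ?_, hc⟩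
  show c (QuotientAddGroup.mk' S s) = 0
  rw [show (QuotientAddGroup.mk' S) s = 0 from (QuotientAddGroup.eq_zero_iff s).mpr hs,
    map_zero]

/-- A finite system of `R`-linear equations with constants in `X` which is solvable in
`X⁺⁺` (through `σ_X`) is already solvable in `X`. -/
lemma solvable_transfer {X : Type u} [AddCommGroup X] [Module R X]
    {ι κ : Type*} [Fintype ι] [Fintype κ]
    (k : κ → ι → R) (x : κ → X) (y : ι → CharMod (CharMod X))
    (h : ∀ j, ∑ i, k j i • y i = charEval R X (x j)) :
    ∃ z : ι → X, ∀ j, ∑ i, k j i • z i = x j := by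
  classical
  by_contra hc
  -- the additive map `v ↦ (∑ i, k j i • v i)_j`
  let φ : (ι → X) →+ (κ → X) :=
    { toFun := fun v j => ∑ i, k j i • v i
      map_zero' := by funext j; simp
      map_add' := by intro v w; funext j; simp [smul_add, Finset.sum_add_distrib] }
  have hx : x ∉ φ.range := by
    rintro ⟨z, hz⟩
    exact hc ⟨z, fun j => congrFun hz j⟩
  obtain ⟨χ, hχ0, hχx⟩ := exists_char_vanishing φ.range x hx
  let χj : κ → CharMod X := fun j => χ.comp (AddMonoidHom.single (fun _ => X) j)
  have key1 : ∀ w : κ → X, χ w = ∑ j, χj j (w j) := by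
    intro w
    conv_lhs => rw [← Finset.univ_sum_single w]
    rw [map_sum]
    rfl
  have key2 : ∀ i, (∑ j, op (k j i) • χj j) = (0 : CharMod X) := by
    intro i
    refine AddMonoidHom.ext fun v => ?_
    have h0 : χ (φ (Pi.single i v)) = 0 := hχ0 _ ⟨_, rfl⟩
    rw [key1] at h0
    have hco : ∀ j, (φ (Pi.single i v)) j = k j i • v := by
      intro j
      show (∑ i', k j i' • Pi.single i v i') = k j i • v
      rw [Finset.sum_eq_single_of_mem i (Finset.mem_univ i)]
      · rw [Pi.single_eq_same]
      · intro i' _ hne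
        rw [Pi.single_eq_of_ne hne, smul_zero]
    calc (∑ j, op (k j i) • χj j) v = ∑ j, (op (k j i) • χj j) v :=
          CharMod.sum_apply _ _ _
      _ = ∑ j, χj j (k j i • v) := by
          refine Finset.sum_congr rfl fun j _ => ?_
          rw [CharMod.op_smul_apply]
          rfl
      _ = ∑ j, χj j ((φ (Pi.single i v)) j) := by
          refine Finset.sum_congr rfl fun j _ => ?_
          rw [hco j]
      _ = 0 := h0
  apply hχx
  calc χ x = ∑ j, χj j (x j) := key1 x
    _ = ∑ j, (charEval R X (x j)) (χj j) := rfl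
    _ = ∑ j, (∑ i, k j i • y i) (χj j) := by
        refine Finset.sum_congr rfl fun j _ => ?_
        rw [h j]
    _ = ∑ j, ∑ i, y i (op (k j i) • χj j) := by
        refine Finset.sum_congr rfl fun j _ => ?_
        rw [CharMod.sum_apply]
        refine Finset.sum_congr rfl fun i _ => ?_
        rw [CharMod.unop_smul_apply]
    _ = ∑ i, y i (∑ j, op (k j i) • χj j) := by
        rw [Finset.sum_comm]
        exact Finset.sum_congr rfl fun i _ => (map_sum (y i) _ _).symm
    _ = 0 := by
        refine Finset.sum_eq_zero fun i _ => ?_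
        rw [key2 i, map_zero]

/-- Factoring a map through a surjection whose kernel it kills. -/
lemma factor_of_ker_le {M N P : Type*} [AddCommGroup M] [Module R M]
    [AddCommGroup N] [Module R N] [AddCommGroup P] [Module R P]
    (p : M →ₗ[R] N) (hp : Function.Surjective p) (H : M →ₗ[R] P)
    (hle : LinearMap.ker p ≤ LinearMap.ker H) : ∃ h : N →ₗ[R] P, h.comp p = H := by
  let e := p.quotKerEquivOfSurjective hp
  refine ⟨((LinearMap.ker p).liftQ H hle).comp (e.symm : N →ₗ[R] _), ?_⟩
  ext v
  have he : e ((LinearMap.ker p).mkQ v) = p v := rfl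
  have : e.symm (p v) = (LinearMap.ker p).mkQ v := by
    rw [← he, LinearEquiv.symm_apply_apply]
  simp only [LinearMap.comp_apply, LinearEquiv.coe_coe, this]
  exact Submodule.liftQ_apply _ _ _

/-- `σ_X : X → X⁺⁺` is a pure monomorphism. -/
lemma charEval_isPureMono (X : Type u) [AddCommGroup X] [Module R X] :
    IsPureMono (charEval R X) := by
  classical
  constructor
  · -- injectivity
    intro a b hab
    have hz : ∀ c : CharacterModule X, c (a - b) = 0 := by
      intro c
      have := DFunLike.congr_fun hab (c : CharMod X)
      rw [map_sub, show ((c : CharMod X) : X →+ AddCircle (1 : ℚ)) a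
        = ((c : CharMod X) : X →+ AddCircle (1 : ℚ)) b from this, sub_self]
    exact sub_eq_zero.mp (CharacterModule.eq_zero_of_character_apply hz)
  · intro F _ _ hFP g
    obtain ⟨s, hs, hk⟩ := hFP.out
    let p : (s →₀ R) →ₗ[R] F := Finsupp.linearCombination R ((↑) : s → F)
    have hp : Function.Surjective p := by
      rw [← LinearMap.range_eq_top, Finsupp.range_linearCombination,
        Subtype.range_coe_subtype, Finset.setOf_mem, hs]
    obtain ⟨t, ht⟩ := hk
    have hπs : Function.Surjective (LinearMap.range (charEval R X)).mkQ :=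
      Submodule.mkQ_surjective _
    -- choose preimages of `g i` in `X⁺⁺`
    choose y hy using fun i : s => hπs (g (i : F))
    let G : (s →₀ R) →ₗ[R] CharMod (CharMod X) := Finsupp.linearCombination R y
    have hG : (LinearMap.range (charEval R X)).mkQ.comp G = g.comp p := by
      refine Finsupp.lhom_ext fun i c => ?_
      have h1 : Finsupp.single i c = c • Finsupp.single i (1 : R) := by
        rw [Finsupp.smul_single, smul_eq_mul, mul_one]
      rw [h1, map_smul, map_smul]
      congr 1
      show (LinearMap.range (charEval R X)).mkQ (G (Finsupp.single i 1))
        = g (p (Finsupp.single i 1))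
      have hGi : G (Finsupp.single i 1) = y i := by
        show Finsupp.linearCombination R y (Finsupp.single i 1) = y i
        rw [Finsupp.linearCombination_single, one_smul]
      have hpi : p (Finsupp.single i 1) = (i : F) := by
        show Finsupp.linearCombination R _ (Finsupp.single i 1) = _
        rw [Finsupp.linearCombination_single, one_smul]
      rw [hGi, hpi, hy i]
    -- the generators of the kernel map into `range σ`
    have hker : ∀ j : t, (j : s →₀ R) ∈ LinearMap.ker p := by
      intro j
      rw [← ht]
      exact Submodule.subset_span j.2
    have hGrange : ∀ j : t, G (j : s →₀ R) ∈ LinearMap.range (charEval R X) := by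
      intro j
      have h2 := LinearMap.congr_fun hG (j : s →₀ R)
      rw [LinearMap.comp_apply, LinearMap.comp_apply, LinearMap.mem_ker.mp (hker j),
        map_zero] at h2
      rwa [← Submodule.ker_mkQ (LinearMap.range (charEval R X)), LinearMap.mem_ker]
    choose x hx using hGrange
    -- the linear system, solvable in `X⁺⁺`, hence in `X`
    have hsum : ∀ w : s →₀ R, G w = ∑ i, w i • y i := by
      intro w
      show Finsupp.linearCombination R y w = _
      rw [Finsupp.linearCombination_apply, Finsupp.sum_fintype]
      intro i; rw [zero_smul]
    have hsys : ∀ j : t, ∑ i, (j : s →₀ R) i • y i = charEval R X (x j) := by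
      intro j
      rw [← hsum, hx j]
    obtain ⟨z, hz⟩ := solvable_transfer (fun (j : t) (i : s) => (j : s →₀ R) i) x y hsys
    let Z : (s →₀ R) →ₗ[R] X := Finsupp.linearCombination R z
    have hZsum : ∀ w : s →₀ R, Z w = ∑ i, w i • z i := by
      intro w
      show Finsupp.linearCombination R z w = _
      rw [Finsupp.linearCombination_apply, Finsupp.sum_fintype]
      intro i; rw [zero_smul]
    let H : (s →₀ R) →ₗ[R] CharMod (CharMod X) := G - (charEval R X).comp Z
    have hHker : LinearMap.ker p ≤ LinearMap.ker H := by
      rw [← ht, Submodule.span_le]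
      intro w hw
      have hw' : w ∈ t := hw
      have : H w = 0 := by
        show G w - charEval R X (Z w) = 0
        rw [hZsum, map_sum]
        have : ∑ i, charEval R X (w i • z i) = charEval R X (x ⟨w, hw'⟩) := by
          rw [← map_sum, hz ⟨w, hw'⟩]
        rw [this, ← hx ⟨w, hw'⟩, sub_self]
      exact this
    obtain ⟨h, hh⟩ := factor_of_ker_le p hp H hHker
    refine ⟨h, ?_⟩
    -- `π ∘ h = g` since both compose with the surjection `p` to `π ∘ H = π ∘ G`
    have hπH : (LinearMap.range (charEval R X)).mkQ.comp H = g.comp p := by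
      refine LinearMap.ext fun w => ?_
      show (LinearMap.range (charEval R X)).mkQ (G w - charEval R X (Z w)) = g (p w)
      rw [map_sub, show (LinearMap.range (charEval R X)).mkQ (charEval R X (Z w)) = 0 from
        (Submodule.Quotient.mk_eq_zero _).mpr ⟨Z w, rfl⟩, sub_zero]
      exact LinearMap.congr_fun hG w
    have : ((LinearMap.range (charEval R X)).mkQ.comp h).comp p = g.comp p := by
      rw [LinearMap.comp_assoc, hh, hπH]
    refine LinearMap.ext fun u => ?_
    obtain ⟨v, rfl⟩ := hp u
    exact LinearMap.congr_fun this v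

end Aux

/-- **Corollary (duality).** Let `𝒞` be a class of pure injective left `R`-modules and `𝒟` a
class of right `R`-modules with `𝒞⁺ ⊆ 𝒟` and `𝒟⁺ ⊆ 𝒞`. Then `f : A → C` (with `C ∈ 𝒞`) is a
`𝒞`-preenvelope of `A` iff `f⁺ : C⁺ → A⁺` is a `𝒟`-precover of `A⁺`. -/
theorem stmt14 {R : Type u} [Ring R] {A C : Type u}
    [AddCommGroup A] [Module R A] [AddCommGroup C] [Module R C]
    (𝒞 : ∀ (X : Type u) [AddCommGroup X] [Module R X], Prop)
    (𝒟 : ∀ (Y : Type u) [AddCommGroup Y] [Module Rᵐᵒᵖ Y], Prop)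
    (hPI : ∀ (X : Type u) [AddCommGroup X] [Module R X], 𝒞 X → IsPureInjective R X)
    (hCD : ∀ (X : Type u) [AddCommGroup X] [Module R X], 𝒞 X → 𝒟 (CharMod X))
    (hDC : ∀ (Y : Type u) [AddCommGroup Y] [Module Rᵐᵒᵖ Y], 𝒟 Y → 𝒞 (CharMod Y))
    (hC : 𝒞 C) (f : A →ₗ[R] C) :
    -- `f` is a `𝒞`-preenvelope of `A` iff `f⁺` is a `𝒟`-precover of `A⁺`:
    (∀ (X : Type u) [AddCommGroup X] [Module R X], 𝒞 X →
        ∀ g : A →ₗ[R] X, ∃ h : C →ₗ[R] X, h.comp f = g) ↔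
      (𝒟 (CharMod C) ∧
        ∀ (Y : Type u) [AddCommGroup Y] [Module Rᵐᵒᵖ Y], 𝒟 Y →
          ∀ g : Y →ₗ[Rᵐᵒᵖ] CharMod A, ∃ h : Y →ₗ[Rᵐᵒᵖ] CharMod C,
            (charDual f).comp h = g) := by
  constructor
  · -- `f` preenvelope  ⟹  `f⁺` precover (Enochs–Huang)
    intro hpre
    refine ⟨hCD C hC, ?_⟩
    intro Y _ _ hY g
    -- dualize `g` and precompose with `σ_A`
    obtain ⟨h, hh⟩ := hpre (CharMod Y) (hDC Y hY)
      ((charDualOp g).comp (charEval R A))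
    refine ⟨(charDual h).comp (charEvalOp R Y), ?_⟩
    refine LinearMap.ext fun y => AddMonoidHom.ext fun a => ?_
    have h3 := LinearMap.congr_fun hh a
    rw [LinearMap.comp_apply] at h3
    show (charEvalOp R Y y) (h (f a)) = g y a
    rw [h3]
    rfl
  · -- `f⁺` precover  ⟹  `f` preenvelope (uses pure injectivity of members of `𝒞`)
    rintro ⟨-, hprec⟩
    intro X _ _ hX g
    -- `σ_X` splits since `X` is pure injective and `σ_X` is a pure mono
    obtain ⟨ρ, hρ⟩ := hPI X hX X (CharMod (CharMod X)) (charEval R X)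
      (charEval_isPureMono X) LinearMap.id
    -- apply the precover property to `g⁺ : X⁺ → A⁺`
    obtain ⟨h, hh⟩ := hprec (CharMod X) (hCD X hX) (charDual g)
    refine ⟨ρ.comp ((charDualOp h).comp (charEval R C)), ?_⟩
    refine LinearMap.ext fun a => ?_
    show ρ ((charDualOp h) (charEval R C (f a))) = g a
    have hnat : (charDualOp (R := R) h) (charEval R C (f a)) = charEval R X (g a) := by
      refine AddMonoidHom.ext fun χ => ?_
      show (h χ) (f a) = χ (g a)
      exact DFunLike.congr_fun (LinearMap.congr_fun hh χ) a
    rw [hnat]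
    exact LinearMap.congr_fun hρ (g a)
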